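/- For the continuous-time quantum walk on the n-cube started at the origin, the wave function at time t satisfies ψ_t(x) = (cos(t/n))^{n-w} · (i sin(t/n))^{w}, where w is the Hamming weight of x. -/

import Mathlib

open Finset

namespace HypercubeWalk

variable {n : ℕ}

/-- Translation matrix by `v` on the hypercube. -/
def Tmat (n : ℕ) (v : Fin n → ZMod 2) : Matrix (Fin n → ZMod 2) (Fin n → ZMod 2) ℂ :=
  fun x y => if y = x + v then 1 else 0

/-- Standard basis vector. -/
def eVec (n : ℕ) (i : Fin n) : Fin n → ZMod 2 := fun j => if j = i then 1 else 0

lemma Tmat_mul (v w : Fin n → ZMod 2) : Tmat n v * Tmat n w = Tmat n (v + w) := by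
  ext x y
  rw [Matrix.mul_apply, Finset.sum_eq_single (x + v)]
  · simp [Tmat, add_assoc]
  · intro b _ hb
    simp [Tmat, hb]
  · simp

lemma Tmat_zero : Tmat n 0 = 1 := by
  ext x y
  simp [Tmat, Matrix.one_apply, eq_comm]

lemma Tmat_sq (v : Fin n → ZMod 2) : Tmat n v ^ 2 = 1 := by
  rw [sq, Tmat_mul]
  have h : v + v = 0 := by
    funext j
    exact (by decide : ∀ a : ZMod 2, a + a = 0) (v j)
  rw [h, Tmat_zero]

lemma Tmat_comm (v w : Fin n → ZMod 2) : Commute (Tmat n v) (Tmat n w) := by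
  unfold Commute SemiconjBy
  rw [Tmat_mul, Tmat_mul, add_comm]

lemma Tmat_mulVec (v : Fin n → ZMod 2) (f : (Fin n → ZMod 2) → ℂ) :
    (Tmat n v).mulVec f = fun x => f (x + v) := by
  funext x
  simp [Tmat, Matrix.mulVec, dotProduct, ite_mul]

/-- Exponential of a scalar multiple of an involution. -/
lemma exp_smul_invol {m : Type*} [Fintype m] [DecidableEq m]
    (θ : ℂ) (A : Matrix m m ℂ) (hA : A ^ 2 = 1) :
    NormedSpace.exp ((θ * Complex.I) • A)
      = Complex.cos θ • (1 : Matrix m m ℂ) + (Complex.sin θ * Complex.I) • A := by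
  letI : SeminormedRing (Matrix m m ℂ) := Matrix.linftyOpSemiNormedRing
  letI : NormedRing (Matrix m m ℂ) := Matrix.linftyOpNormedRing
  letI : NormedAlgebra ℂ (Matrix m m ℂ) := Matrix.linftyOpNormedAlgebra
  rw [NormedSpace.exp_eq_tsum ℂ]
  refine (HasSum.even_add_odd ?_ ?_).tsum_eq
  · have hc := (Complex.hasSum_cos θ).smul_const (1 : Matrix m m ℂ)
    have hkey : ∀ k : ℕ, ((((2 * k).factorial : ℕ) : ℂ)⁻¹) • ((θ * Complex.I) • A) ^ (2 * k)
        = ((-1 : ℂ) ^ k * θ ^ (2 * k) / ((2 * k).factorial : ℕ)) • (1 : Matrix m m ℂ) := by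
      intro k
      rw [smul_pow, pow_mul A, hA, one_pow, pow_mul (θ * Complex.I), mul_pow, Complex.I_sq,
        smul_smul]
      congr 1
      rw [pow_mul θ]
      ring
    simpa only [hkey] using hc
  · have hs := ((Complex.hasSum_sin θ).mul_right Complex.I).smul_const A
    have hkey : ∀ k : ℕ, ((((2 * k + 1).factorial : ℕ) : ℂ)⁻¹) • ((θ * Complex.I) • A) ^ (2 * k + 1)
        = ((-1 : ℂ) ^ k * θ ^ (2 * k + 1) / ((2 * k + 1).factorial : ℕ) * Complex.I) • A := by
      intro k
      rw [smul_pow, pow_succ A, pow_mul A, hA, one_pow, one_mul, smul_smul]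
      congr 1
      rw [pow_succ (θ * Complex.I), pow_mul (θ * Complex.I), mul_pow, Complex.I_sq,
        pow_succ θ (2 * k), pow_mul θ]
      ring
    simpa only [hkey] using hs

lemma Mcomm (a b : ℂ) (i j : Fin n) :
    Commute (a • (1 : Matrix (Fin n → ZMod 2) (Fin n → ZMod 2) ℂ) + b • Tmat n (eVec n i))
      (a • 1 + b • Tmat n (eVec n j)) := by
  refine Commute.add_left ?_ ?_ <;> refine Commute.add_right ?_ ?_
  · exact (((Commute.one_left _).smul_left a).smul_right a)
  · exact (((Commute.one_left _).smul_left a).smul_right b)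
  · exact (((Commute.one_right _).smul_left b).smul_right a)
  · exact (((Tmat_comm _ _).smul_left b).smul_right b)

lemma zmod2_ne_one : ∀ a : ZMod 2, ¬ a = 1 → a = 0 := by decide

lemma supp_add_eVec_of_zero {x : Fin n → ZMod 2} {i : Fin n} (h : x i = 0) :
    (univ.filter fun j => (x + eVec n i) j = 1) = insert i (univ.filter fun j => x j = 1) := by
  ext j
  by_cases hj : j = i
  · subst hj
    simp only [Finset.mem_filter]
    simp [eVec, h]
  · simp only [Finset.mem_filter]
    simp [eVec, hj]

lemma supp_add_eVec_of_one {x : Fin n → ZMod 2} {i : Fin n} (h : x i = 1) :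
    (univ.filter fun j => (x + eVec n i) j = 1) = (univ.filter fun j => x j = 1).erase i := by
  ext j
  by_cases hj : j = i
  · subst hj
    simp only [Finset.mem_filter]
    simp [eVec, h]
  · simp only [Finset.mem_filter]
    simp [eVec, hj]

lemma prod_mulVec (a b : ℂ) (S : Finset (Fin n)) :
    ((S.noncommProd
        (fun i => a • (1 : Matrix (Fin n → ZMod 2) (Fin n → ZMod 2) ℂ) + b • Tmat n (eVec n i))
        (by intro i _ j _ _; exact Mcomm a b i j)).mulVec (fun y => if y = 0 then (1 : ℂ) else 0))
      = fun x => if (univ.filter fun i => x i = 1) ⊆ S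
          then a ^ (S.card - (univ.filter fun i => x i = 1).card)
            * b ^ (univ.filter fun i => x i = 1).card
          else 0 := by
  induction S using Finset.induction_on with
  | empty =>
    erw [Finset.noncommProd_empty, Matrix.one_mulVec]
    funext x
    by_cases hx : x = 0
    · subst hx
      have h0 : (univ.filter fun i => (0 : Fin n → ZMod 2) i = 1) = ∅ := by
        simp
      simp [h0]
    · have h1 : ¬ (univ.filter fun i => x i = 1) ⊆ (∅ : Finset (Fin n)) := by
        intro hs
        apply hx
        funext j
        by_contra hj
        have hj1 : x j = 1 := by
          have := zmod2_ne_one (x j)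
          by_contra hj2
          exact hj (by rw [this hj2]; rfl)
        exact (Finset.notMem_empty j) (hs (by simp [hj1]))
      simp [hx, h1]
  | @insert i S hiS ih =>
    erw [Finset.noncommProd_insert_of_notMem _ _ _ _ hiS, ← Matrix.mulVec_mulVec, ih]
    funext x
    rw [Matrix.add_mulVec, Matrix.smul_mulVec, Matrix.smul_mulVec,
      Matrix.one_mulVec, Tmat_mulVec]
    simp only [Pi.add_apply, Pi.smul_apply, smul_eq_mul]
    rw [Finset.card_insert_of_notMem hiS]
    simp -failIfUnchanged only [Pi.add_apply] at *
    by_cases hxi : x i = 1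
    · have hmem : i ∈ univ.filter fun j => x j = 1 := by simp [hxi]
      have h1 : ¬ (univ.filter fun j => x j = 1) ⊆ S := fun hs => hiS (hs hmem)
      have h2 := supp_add_eVec_of_one (n := n) hxi
      have h3 : ((univ.filter fun j => x j = 1) ⊆ insert i S)
          ↔ ((univ.filter fun j => x j = 1).erase i ⊆ S) := Finset.subset_insert_iff
      simp only [Pi.add_apply] at h2
      rw [h2]
      set w := (univ.filter fun j => x j = 1).card with hw
      have hw1 : 1 ≤ w := Finset.card_pos.mpr ⟨i, hmem⟩
      have hwe : ((univ.filter fun j => x j = 1).erase i).card = w - 1 :=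
        Finset.card_erase_of_mem hmem
      by_cases h4 : (univ.filter fun j => x j = 1).erase i ⊆ S
      · have hle : w - 1 ≤ S.card := hwe ▸ Finset.card_le_card h4
        rw [if_pos h4, if_pos (h3.mpr h4), if_neg h1, hwe]
        have e1 : S.card - (w - 1) = S.card + 1 - w := by omega
        have hb : b * b ^ (w - 1) = b ^ w := by
          rw [mul_comm, ← pow_succ]
          congr 1
          omega
        rw [e1]
        calc a * 0 + b * (a ^ (S.card + 1 - w) * b ^ (w - 1))
            = a ^ (S.card + 1 - w) * (b * b ^ (w - 1)) := by ring
          _ = _ := by rw [hb]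
      · rw [if_neg h4, if_neg (fun hs => h4 (h3.mp hs)), if_neg h1]
        ring
    · have hxi0 : x i = 0 := zmod2_ne_one _ hxi
      have hnmem : i ∉ univ.filter fun j => x j = 1 := by simp [hxi]
      have h2 := supp_add_eVec_of_zero (n := n) hxi0
      have h3 : ((univ.filter fun j => x j = 1) ⊆ insert i S)
          ↔ ((univ.filter fun j => x j = 1) ⊆ S) :=
        Finset.subset_insert_iff_of_notMem hnmem
      have h5 : ¬ (univ.filter fun j => (x + eVec n i) j = 1) ⊆ S := by
        rw [h2]
        exact fun hs => hiS (hs (Finset.mem_insert_self i _))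
      simp only [Pi.add_apply] at h5
      rw [if_neg h5]
      simp only [h3]
      set w := (univ.filter fun j => x j = 1).card with hw
      by_cases h4 : (univ.filter fun j => x j = 1) ⊆ S
      · have hle : w ≤ S.card := Finset.card_le_card h4
        rw [if_pos h4, if_pos h4]
        have e1 : S.card + 1 - w = (S.card - w) + 1 := by omega
        rw [e1, pow_succ]
        ring
      · rw [if_neg h4, if_neg h4]
        ring

lemma eq_add_eVec_iff (x y : Fin n → ZMod 2) (i : Fin n) :
    y = x + eVec n i ↔ (univ.filter fun j => x j ≠ y j) = {i} := by
  constructor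
  · rintro rfl
    ext j
    by_cases hj : j = i
    · subst hj
      simp [eVec, (by decide : ∀ a : ZMod 2, ¬ a = a + 1)]
    · simp [eVec, hj]
  · intro h
    funext j
    by_cases hj : j = i
    · subst hj
      have hmem : j ∈ (univ.filter fun j => x j ≠ y j) := by
        rw [h]; exact Finset.mem_singleton_self j
      have hne : x j ≠ y j := by simpa using hmem
      have : y j = x j + 1 := (by decide : ∀ a b : ZMod 2, ¬ a = b → b = a + 1) _ _ hne
      simpa [eVec] using this
    · have hnmem : j ∉ (univ.filter fun j => x j ≠ y j) := by
        rw [h]; simpa using hj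
      have heq : x j = y j := by
        by_contra hc
        exact hnmem (by simpa using hc)
      simp [eVec, hj, Pi.add_apply, ← heq]

end HypercubeWalk

open HypercubeWalk in
/-- For the continuous-time quantum walk on the `n`-cube started at the origin,
`ψ_t(x) = cos(t/n)^{n-w} · (i sin(t/n))^w` where `w` is the Hamming weight of `x`. -/
theorem hypercube_walk_wavefunction (n : ℕ) (hn : 1 ≤ n) (t : ℝ)
    (H : Matrix (Fin n → ZMod 2) (Fin n → ZMod 2) ℂ)
    (hH : ∀ x y, H x y =
      if (Finset.univ.filter fun i => x i ≠ y i).card = 1 then (1 / n : ℂ) else 0)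
    (ψ : (Fin n → ZMod 2) → ℂ)
    (hψ : ψ = (NormedSpace.exp ((Complex.I * t) • H)).mulVec
      (fun y => if y = 0 then 1 else 0)) :
    ∀ x : Fin n → ZMod 2,
      ψ x = (Real.cos (t / n) : ℂ) ^ (n - (Finset.univ.filter fun i => x i = 1).card) *
        (Complex.I * Real.sin (t / n)) ^ (Finset.univ.filter fun i => x i = 1).card := by
  intro x
  subst hψ
  have hn0 : (n : ℂ) ≠ 0 := Nat.cast_ne_zero.mpr (by omega)
  set θ : ℂ := ((t / n : ℝ) : ℂ) with hθ
  have hH2 : (Complex.I * t) • H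
      = ∑ i : Fin n, (θ * Complex.I) • Tmat n (eVec n i) := by
    ext x' y
    rw [Matrix.smul_apply, hH x' y, Matrix.sum_apply]
    simp only [Matrix.smul_apply, smul_eq_mul]
    by_cases hc : (Finset.univ.filter fun j => x' j ≠ y j).card = 1
    · obtain ⟨i₀, hi₀⟩ := Finset.card_eq_one.mp hc
      rw [if_pos hc, Finset.sum_eq_single i₀]
      · have hy : y = x' + eVec n i₀ := (eq_add_eVec_iff x' y i₀).mpr hi₀
        simp only [Tmat, if_pos hy, mul_one]
        rw [hθ]
        push_cast
        ring
      · intro b _ hb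
        have hy : ¬ y = x' + eVec n b := by
          intro h
          have := (eq_add_eVec_iff x' y b).mp h
          rw [hi₀] at this
          exact hb (Finset.singleton_inj.mp this.symm)
        simp [Tmat, hy]
      · intro h
        exact absurd (Finset.mem_univ i₀) h
    · rw [if_neg hc, mul_zero]
      refine (Finset.sum_eq_zero ?_).symm
      intro i _
      have hy : ¬ y = x' + eVec n i := by
        intro h
        exact hc (by rw [(eq_add_eVec_iff x' y i).mp h]; simp)
      simp [Tmat, hy]
  have hcomm : (↑(Finset.univ : Finset (Fin n)) : Set (Fin n)).Pairwise
      (Function.onFun Commute fun i => (θ * Complex.I) • Tmat n (eVec n i)) :=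
    fun i _ j _ _ => ((Tmat_comm _ _).smul_left _).smul_right _
  erw [hH2, Matrix.exp_sum_of_commute Finset.univ _ hcomm,
    Finset.noncommProd_congr rfl
      (fun i _ => exp_smul_invol θ (Tmat n (eVec n i)) (Tmat_sq _))
      _,
    prod_mulVec]
  simp only [Finset.subset_univ, if_pos, Finset.card_univ, Fintype.card_fin]
  rw [Complex.ofReal_cos, Complex.ofReal_sin, mul_comm Complex.I]
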